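/- For every k ≥ 0, in the graph L_k, every 2-coloring of the vertices in which no monochromatic connected component has more than 2 vertices is balanced (both color classes have equal size), and the two vertices of degree 2 receive distinct colors. -/
import Mathlib


open SimpleGraph

/-- A cubic graph: every vertex has degree 3. -/
def IsCubic {V : Type*} [Fintype V] (G : SimpleGraph V) : Prop :=
  ∀ v : V, Nat.card (G.neighborSet v) = 3

/-- A circular nowhere-zero `r`-flow: an orientation `dir` of `G` together with
a flow value `f` on each directed edge, with values in `[1, r-1]` and flow
conservation at every vertex. -/
structure CNZF {V : Type*} [Fintype V] (G : SimpleGraph V) (r : ℝ) where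
  dir : V → V → Bool
  f : V → V → ℝ
  orients : ∀ u v, G.Adj u v ↔ (dir u v = true ∨ dir v u = true)
  asymm : ∀ u v, dir u v = true → dir v u = false
  lb : ∀ u v, dir u v = true → 1 ≤ f u v
  ub : ∀ u v, dir u v = true → f u v ≤ r - 1
  conserv : ∀ v : V, (∑ u : V, if dir v u = true then f v u else 0)
      = ∑ u : V, if dir u v = true then f u v else 0

/-- Out-degree of a vertex in an orientation. -/
noncomputable def outDeg {V : Type*} (dir : V → V → Bool) (v : V) : ℕ :=
  Nat.card {u | dir v u = true}

/-- Every connected component of the subgraph induced by `S` is a tree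
on at most `m` vertices. -/
def MonoOK {V : Type*} (G : SimpleGraph V) (m : ℕ) (S : Set V) : Prop :=
  (G.induce S).IsAcyclic ∧
    ∀ c : (G.induce S).ConnectedComponent, Nat.card c.supp ≤ m

/-- A `k`-weak bisection, given by its first part `S`. -/
def IsWeakBisection {V : Type*} [Fintype V] (G : SimpleGraph V) (k : ℕ) (S : Set V) : Prop :=
  Nat.card S = Nat.card (Sᶜ : Set V) ∧ MonoOK G (k-2) S ∧ MonoOK G (k-2) (Sᶜ : Set V)

/-- Every monochromatic component of the 2-coloring `c` has at most `m` vertices. -/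
def MonoAtMost {V : Type*} (G : SimpleGraph V) (c : V → Bool) (m : ℕ) : Prop :=
  ∀ b : Bool, ∀ comp : (G.induce {v | c v = b}).ConnectedComponent,
    Nat.card comp.supp ≤ m

/-- Edges of `L_k` (on vertex labels `0, …, 5+2k`): `L_0` is `K_{3,3}` minus an
edge (parts `{0,1,4}` and `{2,3,5}`, edge `45` removed, degree-2 vertices `4,5`);
at step `j` the two new adjacent vertices `4+2j, 5+2j` are attached to the
previous degree-2 vertices `2+2j, 3+2j`. The degree-2 vertices of `L_k` are
`4+2k` and `5+2k`. -/
def LEdge (k : ℕ) (a b : ℕ) : Prop :=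
  (a, b) ∈ ({(0,2),(0,3),(0,5),(1,2),(1,3),(1,5),(4,2),(4,3)} : Set (ℕ × ℕ)) ∨
  ∃ j, 1 ≤ j ∧ j ≤ k ∧
    ((a, b) = (4+2*j, 5+2*j) ∨ (a, b) = (2+2*j, 4+2*j) ∨ (a, b) = (3+2*j, 5+2*j))

/-- The graph `L_k`. -/
def Lgraph (k : ℕ) : SimpleGraph (Fin (6+2*k)) :=
  SimpleGraph.fromRel (fun a b => LEdge k a.val b.val)

/-- Edges of `T_k`: one copy of `L'_k` (the copy of `L_k` on `0..5+2k` with apex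
`6+2k`), two copies of `L'_0` (on `7+2k..12+2k` with apex `13+2k`, and on
`14+2k..19+2k` with apex `20+2k`), and a central vertex `21+2k` adjacent to the
three apexes. -/
def TEdge (k : ℕ) (a b : ℕ) : Prop :=
  LEdge k a b
  ∨ (a = 6+2*k ∧ (b = 4+2*k ∨ b = 5+2*k))
  ∨ (∃ a' b', LEdge 0 a' b' ∧ a = 7+2*k+a' ∧ b = 7+2*k+b')
  ∨ (a = 13+2*k ∧ (b = 11+2*k ∨ b = 12+2*k))
  ∨ (∃ a' b', LEdge 0 a' b' ∧ a = 14+2*k+a' ∧ b = 14+2*k+b')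
  ∨ (a = 20+2*k ∧ (b = 18+2*k ∨ b = 19+2*k))
  ∨ (a = 21+2*k ∧ (b = 6+2*k ∨ b = 13+2*k ∨ b = 20+2*k))

/-- The cubic graph `T_k`. -/
def Tgraph (k : ℕ) : SimpleGraph (Fin (22+2*k)) :=
  SimpleGraph.fromRel (fun a b => TEdge k a.val b.val)

/-- A valid factor of `G`: a spanning subgraph all of whose components are paths
or cycles (equivalently, all degrees are 1 or 2), such that the two endpoints
(degree-1 vertices) of every odd component are non-adjacent in `G`; in particular
no component is an isolated vertex. -/
def IsValidFactor {V : Type*} (G H : SimpleGraph V) : Prop :=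
  H ≤ G ∧
  (∀ v : V, 1 ≤ Nat.card (H.neighborSet v) ∧ Nat.card (H.neighborSet v) ≤ 2) ∧
  ∀ c : H.ConnectedComponent, Odd (Nat.card c.supp) →
    ∀ u v : V, u ∈ c.supp → v ∈ c.supp → u ≠ v →
      Nat.card (H.neighborSet u) = 1 → Nat.card (H.neighborSet v) = 1 → ¬ G.Adj u v

/-- A component of `H` is a cycle iff all its vertices have degree 2 in `H`. -/
def IsCycleComp {V : Type*} (H : SimpleGraph V) (c : H.ConnectedComponent) : Prop :=
  ∀ v ∈ c.supp, Nat.card (H.neighborSet v) = 2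

/-- An odd cycle component. -/
def OddCycleComp {V : Type*} (H : SimpleGraph V) (c : H.ConnectedComponent) : Prop :=
  Odd (Nat.card c.supp) ∧ IsCycleComp H c

/-- An odd path component (a component with an odd number of vertices containing
a degree-1 vertex). -/
def OddPathComp {V : Type*} (H : SimpleGraph V) (c : H.ConnectedComponent) : Prop :=
  Odd (Nat.card c.supp) ∧ ∃ v ∈ c.supp, Nat.card (H.neighborSet v) = 1

noncomputable def numComponents {V : Type*} (H : SimpleGraph V) : ℕ := Nat.card H.ConnectedComponent

noncomputable def numOddCycles {V : Type*} (H : SimpleGraph V) : ℕ :=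
  Nat.card {c : H.ConnectedComponent // OddCycleComp H c}

/-- `H` is a valid factor of `G` with the minimum number of components. -/
def MinimizesComponents {V : Type*} (G H : SimpleGraph V) : Prop :=
  IsValidFactor G H ∧ ∀ H' : SimpleGraph V, IsValidFactor G H' →
    numComponents H ≤ numComponents H'

/-- `H` is a valid factor of `G` minimizing the number of components and,
subject to that, the number of odd cycles. -/
def IsMinValidFactor {V : Type*} (G H : SimpleGraph V) : Prop :=
  MinimizesComponents G H ∧
  ∀ H' : SimpleGraph V, IsValidFactor G H' →
    numComponents H' = numComponents H → numOddCycles H ≤ numOddCycles H'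

/-- An external vertex of a factor: an endpoint of a path component, or a vertex
of an odd cycle component. -/
def ExternalVtx {V : Type*} (H : SimpleGraph V) (v : V) : Prop :=
  Nat.card (H.neighborSet v) = 1 ∨ OddCycleComp H (H.connectedComponentMk v)


section Aux

private def pairSwap (n : ℕ) : ℕ :=
  if n = 0 then 2 else if n = 1 then 3 else if n = 2 then 0 else if n = 3 then 1
  else if n % 2 = 0 then n+1 else n-1

private lemma pairSwap_ge4_even {n : ℕ} (h4 : 4 ≤ n) (he : n % 2 = 0) : pairSwap n = n+1 := by
  unfold pairSwap; split_ifs <;> omega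

private lemma pairSwap_ge4_odd {n : ℕ} (h4 : 4 ≤ n) (ho : n % 2 = 1) : pairSwap n = n-1 := by
  unfold pairSwap; split_ifs <;> omega

private lemma pairSwap_lt {k n : ℕ} (h : n < 6+2*k) : pairSwap n < 6+2*k := by
  unfold pairSwap; split_ifs <;> omega

private lemma pairSwap_invol (n : ℕ) : pairSwap (pairSwap n) = n := by
  by_cases h0 : n = 0; · subst h0; rfl
  by_cases h1 : n = 1; · subst h1; rfl
  by_cases h2 : n = 2; · subst h2; rfl
  by_cases h3 : n = 3; · subst h3; rfl
  have h4 : 4 ≤ n := by omega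
  by_cases he : n % 2 = 0
  · rw [pairSwap_ge4_even h4 he, pairSwap_ge4_odd (by omega) (by omega)]
    omega
  · rw [pairSwap_ge4_odd h4 (by omega), pairSwap_ge4_even (by omega) (by omega)]
    omega

private lemma bool_ne_iff {a b : Bool} (h : a ≠ b) : b = !a := by
  cases a <;> cases b <;> simp_all

private lemma bool_ne_iff' {a b : Bool} (h : a ≠ b) : a = !b := by
  cases a <;> cases b <;> simp_all

private lemma base_bool (b0 b1 b2 b3 b4 b5 : Bool)
    (h1 : ¬(b2 = b0 ∧ b0 = b3)) (h2 : ¬(b2 = b0 ∧ b0 = b5)) (h3 : ¬(b3 = b0 ∧ b0 = b5))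
    (h4 : ¬(b2 = b1 ∧ b1 = b3)) (h5 : ¬(b2 = b1 ∧ b1 = b5)) (h6 : ¬(b3 = b1 ∧ b1 = b5))
    (h7 : ¬(b0 = b2 ∧ b2 = b1)) (h8 : ¬(b0 = b3 ∧ b3 = b1)) (h9 : ¬(b0 = b5 ∧ b5 = b1))
    (h10 : ¬(b2 = b4 ∧ b4 = b3)) :
    b1 = b0 ∧ b4 = b0 ∧ b2 = !b0 ∧ b3 = !b0 ∧ b5 = !b0 := by
  cases b0 <;> cases b1 <;> cases b2 <;> cases b3 <;> cases b4 <;> cases b5 <;> simp_all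

private lemma step_bool (a b x y : Bool) (hab : a ≠ b)
    (h1 : ¬(a = x ∧ x = y)) (h2 : ¬(b = y ∧ y = x)) : x ≠ y := by
  cases a <;> cases b <;> cases x <;> cases y <;> simp_all

private lemma card_eq_of_invol {V : Type*} (c : V → Bool) (f : V → V)
    (hinv : ∀ v, f (f v) = v) (hfl : ∀ v, c (f v) = ! c v) :
    Nat.card {v | c v = true} = Nat.card {v | c v = false} := by
  apply Nat.card_congr
  refine ⟨fun x => ⟨f x.1, ?_⟩, fun x => ⟨f x.1, ?_⟩, fun x => ?_, fun x => ?_⟩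
  · have hx : c x.1 = true := x.2
    show c (f x.1) = false
    rw [hfl, hx]; rfl
  · have hx : c x.1 = false := x.2
    show c (f x.1) = true
    rw [hfl, hx]; rfl
  · exact Subtype.ext (hinv x.1)
  · exact Subtype.ext (hinv x.1)

private lemma noP3 {V : Type*} [Finite V] {G : SimpleGraph V} {c : V → Bool}
    (hc : MonoAtMost G c 2) {u v w : V}
    (huv : G.Adj u v) (hvw : G.Adj v w) (huw : u ≠ w)
    (h1 : c u = c v) (h2 : c v = c w) : False := by
  classical
  set S : Set V := {x | c x = c v} with hS
  have hu : u ∈ S := h1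
  have hv : v ∈ S := rfl
  have hw : w ∈ S := h2.symm
  set u' : S := ⟨u, hu⟩
  set v' : S := ⟨v, hv⟩
  set w' : S := ⟨w, hw⟩
  have a1 : (G.induce S).Adj u' v' := by simpa using huv
  have a2 : (G.induce S).Adj v' w' := by simpa using hvw
  set comp := (G.induce S).connectedComponentMk v' with hcomp
  have hu' : u' ∈ comp.supp := by
    rw [SimpleGraph.ConnectedComponent.mem_supp_iff]
    exact SimpleGraph.ConnectedComponent.sound a1.reachable
  have hv' : v' ∈ comp.supp := by
    rw [SimpleGraph.ConnectedComponent.mem_supp_iff]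
  have hw' : w' ∈ comp.supp := by
    rw [SimpleGraph.ConnectedComponent.mem_supp_iff]
    exact SimpleGraph.ConnectedComponent.sound a2.symm.reachable
  have hsub : ({u', v', w'} : Set S) ⊆ comp.supp := by
    intro x hx
    simp only [Set.mem_insert_iff, Set.mem_singleton_iff] at hx
    rcases hx with rfl|rfl|rfl
    exacts [hu', hv', hw']
  have hne_uv : u' ≠ v' := fun h => huv.ne (congrArg Subtype.val h)
  have hne_uw : u' ≠ w' := fun h => huw (congrArg Subtype.val h)
  have hne_vw : v' ≠ w' := fun h => hvw.ne (congrArg Subtype.val h)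
  have h3 : ({u', v', w'} : Set S).ncard = 3 := by
    rw [Set.ncard_eq_three]; exact ⟨u', v', w', hne_uv, hne_uw, hne_vw, rfl⟩
  have hle : 3 ≤ (comp.supp).ncard := by
    rw [← h3]; exact Set.ncard_le_ncard hsub (Set.toFinite _)
  have hmax := hc (c v) comp
  rw [Nat.card_coe_set_eq] at hmax
  omega

end Aux

/-- Every 2-coloring of L_k with no monochromatic component on more than 2
vertices is balanced, and the two degree-2 vertices (4+2k and 5+2k) get
distinct colors. -/
theorem stmt4 (k : ℕ) (c : Fin (6+2*k) → Bool)
    (hc : MonoAtMost (Lgraph k) c 2) :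
    Nat.card {v | c v = true} = Nat.card {v | c v = false} ∧
      c ⟨4+2*k, by omega⟩ ≠ c ⟨5+2*k, by omega⟩ := by
  classical
  have adj : ∀ (m1 m2 : ℕ) (h1 : m1 < 6+2*k) (h2 : m2 < 6+2*k), m1 ≠ m2 →
      (LEdge k m1 m2 ∨ LEdge k m2 m1) → (Lgraph k).Adj ⟨m1,h1⟩ ⟨m2,h2⟩ := by
    intro m1 m2 h1 h2 hne he
    rw [Lgraph, SimpleGraph.fromRel_adj]
    exact ⟨fun h => hne (congrArg Fin.val h), he⟩
  have T : ∀ (x m z : ℕ) (hx : x < 6+2*k) (hm : m < 6+2*k) (hz : z < 6+2*k),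
      (LEdge k x m ∨ LEdge k m x) → (LEdge k m z ∨ LEdge k z m) →
      x ≠ m → m ≠ z → x ≠ z →
      ¬ (c ⟨x,hx⟩ = c ⟨m,hm⟩ ∧ c ⟨m,hm⟩ = c ⟨z,hz⟩) := by
    rintro x m z hx hm hz e1 e2 n1 n2 n3 ⟨p1, p2⟩
    exact noP3 hc (adj x m hx hm n1 e1) (adj m z hm hz n2 e2)
      (fun h => n3 (congrArg Fin.val h)) p1 p2
  have ckeq : ∀ (m1 m2 : ℕ) (h1 : m1 < 6+2*k) (h2 : m2 < 6+2*k), m1 = m2 →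
      c ⟨m1,h1⟩ = c ⟨m2,h2⟩ := by
    rintro m1 m2 h1 h2 rfl; rfl
  have e02 : LEdge k 0 2 := Or.inl (by simp)
  have e03 : LEdge k 0 3 := Or.inl (by simp)
  have e05 : LEdge k 0 5 := Or.inl (by simp)
  have e12 : LEdge k 1 2 := Or.inl (by simp)
  have e13 : LEdge k 1 3 := Or.inl (by simp)
  have e15 : LEdge k 1 5 := Or.inl (by simp)
  have e42 : LEdge k 4 2 := Or.inl (by simp)
  have e43 : LEdge k 4 3 := Or.inl (by simp)
  obtain ⟨B1, B4, B2, B3, B5⟩ :=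
    base_bool (c ⟨0, by omega⟩) (c ⟨1, by omega⟩) (c ⟨2, by omega⟩)
      (c ⟨3, by omega⟩) (c ⟨4, by omega⟩) (c ⟨5, by omega⟩)
      (T 2 0 3 (by omega) (by omega) (by omega) (Or.inr e02) (Or.inl e03) (by omega) (by omega) (by omega))
      (T 2 0 5 (by omega) (by omega) (by omega) (Or.inr e02) (Or.inl e05) (by omega) (by omega) (by omega))
      (T 3 0 5 (by omega) (by omega) (by omega) (Or.inr e03) (Or.inl e05) (by omega) (by omega) (by omega))
      (T 2 1 3 (by omega) (by omega) (by omega) (Or.inr e12) (Or.inl e13) (by omega) (by omega) (by omega))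
      (T 2 1 5 (by omega) (by omega) (by omega) (Or.inr e12) (Or.inl e15) (by omega) (by omega) (by omega))
      (T 3 1 5 (by omega) (by omega) (by omega) (Or.inr e13) (Or.inl e15) (by omega) (by omega) (by omega))
      (T 0 2 1 (by omega) (by omega) (by omega) (Or.inl e02) (Or.inr e12) (by omega) (by omega) (by omega))
      (T 0 3 1 (by omega) (by omega) (by omega) (Or.inl e03) (Or.inr e13) (by omega) (by omega) (by omega))
      (T 0 5 1 (by omega) (by omega) (by omega) (Or.inl e05) (Or.inr e15) (by omega) (by omega) (by omega))
      (T 2 4 3 (by omega) (by omega) (by omega) (Or.inr e42) (Or.inl e43) (by omega) (by omega) (by omega))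
  have lad : ∀ j, ∀ (h4 : 4+2*j < 6+2*k) (h5 : 5+2*j < 6+2*k), j ≤ k →
      c ⟨4+2*j, h4⟩ ≠ c ⟨5+2*j, h5⟩ := by
    intro j
    induction j with
    | zero =>
      intro h4 h5 _
      have hne : c ⟨4, (by omega : (4:ℕ) < 6+2*k)⟩ ≠ c ⟨5, (by omega : (5:ℕ) < 6+2*k)⟩ := by
        rw [B4, B5]
        intro hcon
        simp at hcon
      exact hne
    | succ n ih =>
      intro h4 h5 hk
      have e1 : LEdge k (4+2*(n+1)) (5+2*(n+1)) := Or.inr ⟨n+1, by omega, hk, Or.inl rfl⟩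
      have e2 : LEdge k (2+2*(n+1)) (4+2*(n+1)) := Or.inr ⟨n+1, by omega, hk, Or.inr (Or.inl rfl)⟩
      have e3 : LEdge k (3+2*(n+1)) (5+2*(n+1)) := Or.inr ⟨n+1, by omega, hk, Or.inr (Or.inr rfl)⟩
      have e2' : LEdge k (4+2*n) (4+2*(n+1)) := by
        rw [show (4+2*n : ℕ) = 2+2*(n+1) from by ring]; exact e2
      have e3' : LEdge k (5+2*n) (5+2*(n+1)) := by
        rw [show (5+2*n : ℕ) = 3+2*(n+1) from by ring]; exact e3
      exact step_bool (c ⟨4+2*n, by omega⟩) (c ⟨5+2*n, by omega⟩)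
        (c ⟨4+2*(n+1), h4⟩) (c ⟨5+2*(n+1), h5⟩)
        (ih (by omega) (by omega) (by omega))
        (T (4+2*n) (4+2*(n+1)) (5+2*(n+1)) (by omega) h4 h5 (Or.inl e2') (Or.inl e1)
          (by omega) (by omega) (by omega))
        (T (5+2*n) (5+2*(n+1)) (4+2*(n+1)) (by omega) h5 h4 (Or.inl e3') (Or.inr e1)
          (by omega) (by omega) (by omega))
  have hflip : ∀ (n : ℕ) (hn : n < 6+2*k),
      c ⟨pairSwap n, pairSwap_lt hn⟩ = ! c ⟨n, hn⟩ := by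
    intro n hn
    by_cases h0 : n = 0
    · subst h0; exact B2
    by_cases h1 : n = 1
    · subst h1; rw [B1]; exact B3
    by_cases h2 : n = 2
    · subst h2
      rw [B2, Bool.not_not]
      exact ckeq _ _ _ _ rfl
    by_cases h3 : n = 3
    · subst h3
      rw [B3, Bool.not_not, ← B1]
      exact ckeq _ _ _ _ rfl
    have h4n : 4 ≤ n := by omega
    by_cases he : n % 2 = 0
    · obtain ⟨p, rfl⟩ : ∃ p, n = 4+2*p := ⟨(n-4)/2, by omega⟩
      rw [ckeq (pairSwap (4+2*p)) (5+2*p) (pairSwap_lt hn) (by omega)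
        (by rw [pairSwap_ge4_even (by omega) (by omega)]; omega)]
      exact bool_ne_iff (lad p (by omega) (by omega) (by omega))
    · obtain ⟨p, rfl⟩ : ∃ p, n = 5+2*p := ⟨(n-5)/2, by omega⟩
      rw [ckeq (pairSwap (5+2*p)) (4+2*p) (pairSwap_lt hn) (by omega)
        (by rw [pairSwap_ge4_odd (by omega) (by omega)]; omega)]
      exact bool_ne_iff' (lad p (by omega) (by omega) (by omega))
  constructor
  · exact card_eq_of_invol c (fun v => ⟨pairSwap v.val, pairSwap_lt v.isLt⟩)
      (fun v => Fin.ext (pairSwap_invol v.val))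
      (fun v => hflip v.val v.isLt)
  · exact lad k (by omega) (by omega) le_rfl
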